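/- Let Ω be a bounded open subset of ℝ^N (N ≥ 3) and let p₁, p₂, q : closure(Ω) → ℝ be continuous functions satisfying 1 < p₂(x) < q⁻ ≤ q⁺ < p₁(x) < N for all x ∈ closure(Ω), where q⁻ = min_{closure(Ω)} q and q⁺ = max_{closure(Ω)} q. For u : ℝ^N → ℝ of class C¹ with compact support contained in Ω, set J(u) = ∫_Ω (1/p₁(x))|Du|^{p₁(x)} dx + ∫_Ω (1/p₂(x))|Du|^{p₂(x)} dx, I(u) = ∫_Ω (1/q(x))|u|^{q(x)} dx, and ‖u‖ = inf { μ > 0 : ∫_Ω (|Du(x)|/μ)^{p₁(x)} dx ≤ 1 }. Then for every M > 0 there exists K > 0 such that every such u which is not identically zero and satisfies ‖u‖ ≥ K obeys J(u) ≥ M · I(u). -/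

import Mathlib

open MeasureTheory ENNReal

/-- `J(u) = ∫_Ω (1/p₁(x))|Du|^{p₁(x)} dx + ∫_Ω (1/p₂(x))|Du|^{p₂(x)} dx`. -/
noncomputable def Jfun (N : ℕ) (Ω : Set (EuclideanSpace ℝ (Fin N)))
    (p₁ p₂ : EuclideanSpace ℝ (Fin N) → ℝ) (u : EuclideanSpace ℝ (Fin N) → ℝ) : ℝ≥0∞ :=
  (∫⁻ x in Ω, ENNReal.ofReal ((1 / p₁ x) * ‖fderiv ℝ u x‖ ^ p₁ x)) +
    ∫⁻ x in Ω, ENNReal.ofReal ((1 / p₂ x) * ‖fderiv ℝ u x‖ ^ p₂ x)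

/-- `I(u) = ∫_Ω (1/q(x))|u|^{q(x)} dx`. -/
noncomputable def Ifun (N : ℕ) (Ω : Set (EuclideanSpace ℝ (Fin N)))
    (q : EuclideanSpace ℝ (Fin N) → ℝ) (u : EuclideanSpace ℝ (Fin N) → ℝ) : ℝ≥0∞ :=
  ∫⁻ x in Ω, ENNReal.ofReal ((1 / q x) * |u x| ^ q x)

/-- `‖u‖ = inf { μ > 0 : ∫_Ω (|Du(x)|/μ)^{p₁(x)} dx ≤ 1 }`, the Luxemburg norm of
    `|Du|` with respect to the variable exponent `p₁` on `Ω`. -/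
noncomputable def luxGrad (N : ℕ) (Ω : Set (EuclideanSpace ℝ (Fin N)))
    (p₁ : EuclideanSpace ℝ (Fin N) → ℝ) (u : EuclideanSpace ℝ (Fin N) → ℝ) : ℝ :=
  sInf {m : ℝ | 0 < m ∧
    ∫⁻ x in Ω, ENNReal.ofReal ((‖fderiv ℝ u x‖ / m) ^ p₁ x) ≤ 1}


open NNReal Module

lemma myYoung {r p ε t : ℝ} (hr : 0 ≤ r) (hrp : r < p) (hε : 0 < ε) (ht : 0 ≤ t) :
    t ^ r ≤ ε * t ^ p + (ε ^ (-(p - r)⁻¹)) ^ r := by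
  set T := ε ^ (-(p - r)⁻¹) with hT
  have hT0 : 0 < T := Real.rpow_pos_of_pos hε _
  have htp : 0 ≤ t ^ p := Real.rpow_nonneg ht p
  rcases le_or_gt t T with h | h
  · have h1 : t ^ r ≤ T ^ r := Real.rpow_le_rpow ht h hr
    nlinarith
  · have h1 : t ^ r = t ^ p * t ^ (r - p) := by
      rw [← Real.rpow_add (hT0.trans h)]; ring_nf
    have h2 : t ^ (r - p) ≤ T ^ (r - p) :=
      Real.rpow_le_rpow_of_nonpos hT0 h.le (by linarith)
    have h3 : T ^ (r - p) = ε := by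
      rw [hT, ← Real.rpow_mul hε.le,
        show (-(p - r)⁻¹) * (r - p) = 1 by have h0 : p - r ≠ 0 := sub_ne_zero.mpr hrp.ne'; field_simp; ring, Real.rpow_one]
    have h4 : t ^ p * t ^ (r - p) ≤ t ^ p * ε := by
      calc t ^ p * t ^ (r - p) ≤ t ^ p * T ^ (r - p) := by gcongr
        _ = t ^ p * ε := by rw [h3]
    have h5 : 0 ≤ T ^ r := Real.rpow_nonneg hT0.le r
    nlinarith

lemma mySetLIntegralMono {α : Type*} [MeasurableSpace α] {μ : Measure α} {s : Set α}
    (hs : MeasurableSet s) {f g : α → ℝ≥0∞} (h : ∀ x ∈ s, f x ≤ g x) :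
    ∫⁻ x in s, f x ∂μ ≤ ∫⁻ x in s, g x ∂μ :=
  lintegral_mono_ae ((ae_restrict_iff' hs).2 (Filter.Eventually.of_forall h))

lemma myOfRealNormRpow {E : Type*} [NormedAddCommGroup E] (y : E) {r : ℝ} (hr : 0 ≤ r) :
    ENNReal.ofReal (‖y‖ ^ r) = (‖y‖₊ : ℝ≥0∞) ^ r := by
  rw [← ENNReal.ofReal_rpow_of_nonneg (norm_nonneg y) hr, ofReal_norm, enorm_eq_nnnorm]

lemma mySobolev {N : ℕ} (Ω : Set (EuclideanSpace ℝ (Fin N))) (hΩb : Bornology.IsBounded Ω)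
    {r : ℝ≥0} (hr1 : 1 ≤ r) (hrN : (r : ℝ) < N) :
    ∃ C : ℝ≥0∞, C ≠ ∞ ∧ ∀ u : EuclideanSpace ℝ (Fin N) → ℝ, ContDiff ℝ 1 u →
      tsupport u ⊆ Ω →
      (∫⁻ x in Ω, ENNReal.ofReal (|u x| ^ (r : ℝ))) ≤
        C * ∫⁻ x in Ω, ENNReal.ofReal (‖fderiv ℝ u x‖ ^ (r : ℝ)) := by
  have hrpos : (0 : ℝ) < r := lt_of_lt_of_le one_pos (by exact_mod_cast hr1)
  refine ⟨((eLpNormLESNormFDerivOfLeConst ℝ volume Ω r r : ℝ≥0∞)) ^ (r : ℝ), ?_, ?_⟩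
  · rw [← ENNReal.coe_rpow_of_nonneg _ hrpos.le]; exact ENNReal.coe_ne_top
  intro u hu hsupp
  have h2u : Function.support u ⊆ Ω := subset_trans (subset_tsupport u) hsupp
  have hfr : finrank ℝ (EuclideanSpace ℝ (Fin N)) = N := finrank_euclideanSpace_fin
  have key := eLpNorm_le_eLpNorm_fderiv (volume) hu h2u hr1
    (by rw [hfr]; exact_mod_cast hrN) hΩb
  have hL : (∫⁻ x in Ω, ENNReal.ofReal (|u x| ^ (r : ℝ))) =
      eLpNorm u r volume ^ (r : ℝ) := by
    rw [eLpNorm_nnreal_eq_lintegral (by positivity), ← ENNReal.rpow_mul, one_div,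
      inv_mul_cancel₀ (ne_of_gt hrpos), ENNReal.rpow_one]
    rw [show (fun x => ENNReal.ofReal (|u x| ^ (r : ℝ))) =
        fun x => ((‖u x‖₊ : ℝ≥0∞)) ^ (r : ℝ) from funext fun x => by
      rw [← Real.norm_eq_abs, myOfRealNormRpow _ hrpos.le]]
    exact setLIntegral_eq_of_support_subset (fun x hx => by
      refine h2u ?_
      intro h0
      apply hx
      simp [h0, ENNReal.zero_rpow_of_pos hrpos])
  have hR : (∫⁻ x in Ω, ENNReal.ofReal (‖fderiv ℝ u x‖ ^ (r : ℝ))) =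
      eLpNorm (fderiv ℝ u) r volume ^ (r : ℝ) := by
    rw [eLpNorm_nnreal_eq_lintegral (by positivity), ← ENNReal.rpow_mul, one_div,
      inv_mul_cancel₀ (ne_of_gt hrpos), ENNReal.rpow_one]
    rw [show (fun x => ENNReal.ofReal (‖fderiv ℝ u x‖ ^ (r : ℝ))) =
        fun x => ((‖fderiv ℝ u x‖₊ : ℝ≥0∞)) ^ (r : ℝ) from funext fun x =>
      myOfRealNormRpow _ hrpos.le]
    exact setLIntegral_eq_of_support_subset (fun x hx => by
      refine hsupp (support_fderiv_subset ℝ ?_)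
      intro h0
      apply hx
      simp only [h0]
      simp [ENNReal.zero_rpow_of_pos hrpos])
  rw [hL, hR, ← ENNReal.mul_rpow_of_nonneg _ _ hrpos.le]
  exact ENNReal.rpow_le_rpow key hrpos.le

set_option maxHeartbeats 1000000 in
/-- Under `1 < p₂(x) < q⁻ ≤ q⁺ < p₁(x) < N` on `closure Ω`, `J(u)/I(u) → ∞` as
    `‖u‖ → ∞`: for every `M > 0` there is `K > 0` such that every nontrivial `C¹`
    function `u` with compact support in `Ω` and `‖u‖ ≥ K` satisfies `J(u) ≥ M I(u)`. -/
theorem stmt8 (N : ℕ) (hN : 3 ≤ N) (Ω : Set (EuclideanSpace ℝ (Fin N)))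
    (hΩo : IsOpen Ω) (hΩb : Bornology.IsBounded Ω)
    (p₁ p₂ q : EuclideanSpace ℝ (Fin N) → ℝ)
    (hp₁ : ContinuousOn p₁ (closure Ω)) (hp₂ : ContinuousOn p₂ (closure Ω))
    (hq : ContinuousOn q (closure Ω))
    (qm qp : ℝ) (hqm : IsLeast (q '' closure Ω) qm)
    (hqp : IsGreatest (q '' closure Ω) qp)
    (hcond : ∀ x ∈ closure Ω, 1 < p₂ x ∧ p₂ x < qm ∧ qp < p₁ x ∧ p₁ x < N) :
    ∀ M : ℝ, 0 < M → ∃ K : ℝ, 0 < K ∧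
      ∀ u : EuclideanSpace ℝ (Fin N) → ℝ,
        ContDiff ℝ 1 u → HasCompactSupport u → tsupport u ⊆ Ω → u ≠ 0 →
        K ≤ luxGrad N Ω p₁ u →
        ENNReal.ofReal M * Ifun N Ω q u ≤ Jfun N Ω p₁ p₂ u := by
  intro M hM
  have hΩm : MeasurableSet Ω := hΩo.measurableSet
  obtain ⟨x₀, hx₀, hx₀q⟩ := hqm.1
  have hclne : (closure Ω).Nonempty := ⟨x₀, hx₀⟩
  have hcc : IsCompact (closure Ω) := hΩb.isCompact_closure
  obtain ⟨z, hz, hzmax⟩ := hcc.exists_isMaxOn hclne hp₁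
  obtain ⟨w, hw, hwmin⟩ := hcc.exists_isMinOn hclne hp₁
  set Pp := p₁ z with hPpdef
  set pm := p₁ w with hpmdef
  have hqm1 : 1 < qm := by
    have h := hcond x₀ hx₀
    have : q x₀ = qm := hx₀q
    linarith [h.1, h.2.1]
  have hqmqp : qm ≤ qp := hqp.2 ⟨x₀, hx₀, hx₀q⟩
  have hqppm : qp < pm := (hcond w hw).2.2.1
  have hpmPp : pm ≤ Pp := hzmax hw
  have hqpN : (qp : ℝ) < N := lt_trans (hcond z hz).2.2.1 (hcond z hz).2.2.2
  have hqm0 : (0:ℝ) < qm := by linarith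
  have hqp0 : (0:ℝ) < qp := by linarith
  have hpm0 : (0:ℝ) < pm := by linarith
  have hPp0 : (0:ℝ) < Pp := by linarith
  -- Sobolev constants
  have hrqm : ((qm.toNNReal : ℝ)) = qm := Real.coe_toNNReal _ hqm0.le
  have hrqp : ((qp.toNNReal : ℝ)) = qp := Real.coe_toNNReal _ hqp0.le
  obtain ⟨C₁, hC₁top, hC₁⟩ := mySobolev Ω hΩb (r := qm.toNNReal)
    (by rw [← Real.toNNReal_one]; exact Real.toNNReal_le_toNNReal hqm1.le)
    (by rw [hrqm]; linarith)
  obtain ⟨C₂, hC₂top, hC₂⟩ := mySobolev Ω hΩb (r := qp.toNNReal)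
    (by rw [← Real.toNNReal_one]; exact Real.toNNReal_le_toNNReal (by linarith))
    (by rw [hrqp]; exact hqpN)
  rw [hrqm] at hC₁
  rw [hrqp] at hC₂
  -- real constants
  set c : ℝ := C₁.toReal + C₂.toReal + 1 with hcdef
  have hc0 : 0 < c := by positivity
  set ε : ℝ := (2 * M * c * Pp)⁻¹ with hεdef
  have hε0 : 0 < ε := by positivity
  set T₁ : ℝ := ε ^ (-(pm - qm)⁻¹) with hT₁def
  set T₂ : ℝ := ε ^ (-(pm - qp)⁻¹) with hT₂def
  set Em : ℝ := max (ε + T₁ ^ qm) (ε + T₂ ^ qp) with hEmdef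
  have hT₁0 : 0 ≤ T₁ ^ qm := Real.rpow_nonneg (Real.rpow_nonneg hε0.le _) _
  have hT₂0 : 0 ≤ T₂ ^ qp := Real.rpow_nonneg (Real.rpow_nonneg hε0.le _) _
  have hEm0 : 0 ≤ Em := le_trans (by linarith) (le_max_left _ _)
  set V : ℝ := (volume Ω).toReal with hVdef
  have hV0 : 0 ≤ V := ENNReal.toReal_nonneg
  set D : ℝ := M * c * Em * V with hDdef
  have hD0 : 0 ≤ D := by positivity
  set X : ℝ := (2 * D * Pp + 1) ^ (pm⁻¹) with hXdef
  have hX0 : 0 ≤ X := Real.rpow_nonneg (by positivity) _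
  refine ⟨max 2 (1 + X), lt_of_lt_of_le two_pos (le_max_left _ _), ?_⟩
  intro u hu hcs hts hne hK
  set K : ℝ := max 2 (1 + X) with hKdef
  have hK1 : 1 ≤ K - 1 := by
    have : (2:ℝ) ≤ K := le_max_left _ _
    linarith
  have hKX : X ≤ K - 1 := by
    have : 1 + X ≤ K := le_max_right _ _
    linarith
  set G : ℝ≥0∞ := ∫⁻ x in Ω, ENNReal.ofReal (‖fderiv ℝ u x‖ ^ p₁ x) with hGdef
  -- Step 1: modular lower bound on G
  have hnotS : ¬ (0 < K - 1 ∧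
      (∫⁻ x in Ω, ENNReal.ofReal ((‖fderiv ℝ u x‖ / (K - 1)) ^ p₁ x)) ≤ 1) := by
    intro hmem
    have hle : luxGrad N Ω p₁ u ≤ K - 1 :=
      csInf_le ⟨0, fun y hy => hy.1.le⟩ hmem
    linarith
  have hInt : 1 < ∫⁻ x in Ω, ENNReal.ofReal ((‖fderiv ℝ u x‖ / (K - 1)) ^ p₁ x) := by
    by_contra hle
    push_neg at hle
    exact hnotS ⟨by linarith, hle⟩
  have hGlow : ENNReal.ofReal ((K - 1) ^ pm) ≤ G := by
    calc ENNReal.ofReal ((K - 1) ^ pm)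
        = ENNReal.ofReal ((K - 1) ^ pm) * 1 := (mul_one _).symm
      _ ≤ ENNReal.ofReal ((K - 1) ^ pm) *
          ∫⁻ x in Ω, ENNReal.ofReal ((‖fderiv ℝ u x‖ / (K - 1)) ^ p₁ x) :=
          mul_le_mul_right hInt.le _
      _ = ∫⁻ x in Ω, ENNReal.ofReal ((K - 1) ^ pm) *
          ENNReal.ofReal ((‖fderiv ℝ u x‖ / (K - 1)) ^ p₁ x) :=
          (lintegral_const_mul' _ _ ENNReal.ofReal_ne_top).symm
      _ ≤ G := by
          apply mySetLIntegralMono hΩm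
          intro x hx
          have hxcl : x ∈ closure Ω := subset_closure hx
          have h1 : pm ≤ p₁ x := hwmin hxcl
          have ha : (0:ℝ) ≤ ‖fderiv ℝ u x‖ := norm_nonneg _
          rw [← ENNReal.ofReal_mul (Real.rpow_nonneg (by linarith) _)]
          apply ENNReal.ofReal_le_ofReal
          calc (K - 1) ^ pm * (‖fderiv ℝ u x‖ / (K - 1)) ^ p₁ x
              ≤ (K - 1) ^ p₁ x * (‖fderiv ℝ u x‖ / (K - 1)) ^ p₁ x := by
                exact mul_le_mul_of_nonneg_right
                  (Real.rpow_le_rpow_of_exponent_le hK1 h1)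
                  (Real.rpow_nonneg (by positivity) _)
            _ = ‖fderiv ℝ u x‖ ^ p₁ x := by
                rw [← Real.mul_rpow (by linarith) (by positivity)]
                congr 1
                field_simp
  -- Step 2: G ≤ Pp * J
  have hGJ : G ≤ ENNReal.ofReal Pp * Jfun N Ω p₁ p₂ u := by
    have hG1 : G ≤ ENNReal.ofReal Pp *
        ∫⁻ x in Ω, ENNReal.ofReal ((1 / p₁ x) * ‖fderiv ℝ u x‖ ^ p₁ x) := by
      rw [← lintegral_const_mul' _ _ ENNReal.ofReal_ne_top]
      apply mySetLIntegralMono hΩm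
      intro x hx
      have hxcl : x ∈ closure Ω := subset_closure hx
      have hpx : 0 < p₁ x := by linarith [(hcond x hxcl).2.2.1]
      have hle : p₁ x ≤ Pp := hzmax hxcl
      rw [← ENNReal.ofReal_mul hPp0.le]
      apply ENNReal.ofReal_le_ofReal
      have hnn : (0:ℝ) ≤ ‖fderiv ℝ u x‖ ^ p₁ x := Real.rpow_nonneg (norm_nonneg _) _
      have hdiv : 1 ≤ Pp / p₁ x := (one_le_div hpx).mpr hle
      calc ‖fderiv ℝ u x‖ ^ p₁ x = 1 * ‖fderiv ℝ u x‖ ^ p₁ x := (one_mul _).symm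
        _ ≤ (Pp / p₁ x) * ‖fderiv ℝ u x‖ ^ p₁ x := mul_le_mul_of_nonneg_right hdiv hnn
        _ = Pp * (1 / p₁ x * ‖fderiv ℝ u x‖ ^ p₁ x) := by ring
    refine hG1.trans (mul_le_mul_right ?_ _)
    exact le_self_add
  -- Step 3: gradient Lᵣ bounds
  have hB : ∀ r : ℝ, 0 < r → r < pm →
      (∫⁻ x in Ω, ENNReal.ofReal (‖fderiv ℝ u x‖ ^ r)) ≤
        ENNReal.ofReal ε * G +
          ENNReal.ofReal (ε + (ε ^ (-(pm - r)⁻¹)) ^ r) * volume Ω := by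
    intro r hr0 hrpm
    calc (∫⁻ x in Ω, ENNReal.ofReal (‖fderiv ℝ u x‖ ^ r))
        ≤ ∫⁻ x in Ω, (ENNReal.ofReal ε * ENNReal.ofReal (‖fderiv ℝ u x‖ ^ p₁ x) +
            ENNReal.ofReal (ε + (ε ^ (-(pm - r)⁻¹)) ^ r)) := by
          apply mySetLIntegralMono hΩm
          intro x hx
          have hxcl : x ∈ closure Ω := subset_closure hx
          set t : ℝ := ‖fderiv ℝ u x‖ with htdef
          have ht : 0 ≤ t := norm_nonneg _
          have hy := myYoung hr0.le hrpm hε0 ht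
          have hmid : t ^ pm ≤ 1 + t ^ p₁ x := by
            rcases le_or_gt t 1 with h1t | h1t
            · have := Real.rpow_le_one ht h1t hpm0.le
              have := Real.rpow_nonneg ht (p₁ x)
              linarith
            · have := Real.rpow_le_rpow_of_exponent_le h1t.le (hwmin hxcl)
              linarith
          have hmul : ε * t ^ pm ≤ ε * (1 + t ^ p₁ x) :=
            mul_le_mul_of_nonneg_left hmid hε0.le
          have hptw : t ^ r ≤ ε * t ^ p₁ x + (ε + (ε ^ (-(pm - r)⁻¹)) ^ r) := by
            have hexp : ε * (1 + t ^ p₁ x) = ε + ε * t ^ p₁ x := by ring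
            linarith
          calc ENNReal.ofReal (t ^ r)
              ≤ ENNReal.ofReal (ε * t ^ p₁ x + (ε + (ε ^ (-(pm - r)⁻¹)) ^ r)) :=
                ENNReal.ofReal_le_ofReal hptw
            _ ≤ ENNReal.ofReal (ε * t ^ p₁ x) +
                ENNReal.ofReal (ε + (ε ^ (-(pm - r)⁻¹)) ^ r) := ENNReal.ofReal_add_le
            _ = ENNReal.ofReal ε * ENNReal.ofReal (t ^ p₁ x) +
                ENNReal.ofReal (ε + (ε ^ (-(pm - r)⁻¹)) ^ r) := by
                rw [ENNReal.ofReal_mul hε0.le]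
      _ = ENNReal.ofReal ε * G +
          ENNReal.ofReal (ε + (ε ^ (-(pm - r)⁻¹)) ^ r) * volume Ω := by
          rw [lintegral_add_right _ measurable_const,
            lintegral_const_mul' _ _ ENNReal.ofReal_ne_top, setLIntegral_const]
  -- Step 4: I ≤ A₁ + A₂
  have hI : Ifun N Ω q u ≤ (∫⁻ x in Ω, ENNReal.ofReal (|u x| ^ qm)) +
      ∫⁻ x in Ω, ENNReal.ofReal (|u x| ^ qp) := by
    have hmeas : Measurable fun x => ENNReal.ofReal (|u x| ^ qp) :=
      ((hu.continuous.abs.rpow_const (fun x => Or.inr hqp0.le)).measurable).ennreal_ofReal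
    calc Ifun N Ω q u
        ≤ ∫⁻ x in Ω, (ENNReal.ofReal (|u x| ^ qm) + ENNReal.ofReal (|u x| ^ qp)) := by
          apply mySetLIntegralMono hΩm
          intro x hx
          have hxcl : x ∈ closure Ω := subset_closure hx
          have hq1 : qm ≤ q x := hqm.2 ⟨x, hxcl, rfl⟩
          have hq2 : q x ≤ qp := hqp.2 ⟨x, hxcl, rfl⟩
          have h0q : 0 < q x := by linarith
          set t : ℝ := |u x| with htdef
          have ht : 0 ≤ t := abs_nonneg _
          have h1 : (1 / q x) * t ^ q x ≤ t ^ q x := by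
            have h0 : 0 ≤ t ^ q x := Real.rpow_nonneg ht _
            have h2 : 1 / q x ≤ 1 := by
              rw [div_le_one h0q]; linarith
            nlinarith
          have h2 : t ^ q x ≤ t ^ qm + t ^ qp := by
            rcases eq_or_lt_of_le ht with h0 | h0
            · rw [← h0, Real.zero_rpow (ne_of_gt h0q)]
              positivity
            · rcases le_or_gt t 1 with h1t | h1t
              · have := Real.rpow_le_rpow_of_exponent_ge h0 h1t hq1
                have := Real.rpow_nonneg ht qp
                linarith
              · have := Real.rpow_le_rpow_of_exponent_le h1t.le hq2
                have := Real.rpow_nonneg ht qm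
                linarith
          calc ENNReal.ofReal ((1 / q x) * t ^ q x)
              ≤ ENNReal.ofReal (t ^ qm + t ^ qp) :=
                ENNReal.ofReal_le_ofReal (h1.trans h2)
            _ ≤ _ := ENNReal.ofReal_add_le
      _ = _ := lintegral_add_right _ hmeas
  -- Step 5: Sobolev applications
  have hA₁ := hC₁ u hu hts
  have hA₂ := hC₂ u hu hts
  -- assembly
  set J : ℝ≥0∞ := Jfun N Ω p₁ p₂ u with hJdef
  set R : ℝ≥0∞ := ENNReal.ofReal ε * G + ENNReal.ofReal Em * volume Ω with hRdef
  have hB₁ : (∫⁻ x in Ω, ENNReal.ofReal (‖fderiv ℝ u x‖ ^ qm)) ≤ R := by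
    refine (hB qm hqm0 (by linarith)).trans ?_
    refine add_le_add_right (mul_le_mul_left (ENNReal.ofReal_le_ofReal ?_) _) _
    exact le_max_left _ _
  have hB₂ : (∫⁻ x in Ω, ENNReal.ofReal (‖fderiv ℝ u x‖ ^ qp)) ≤ R := by
    refine (hB qp hqp0 (by linarith)).trans ?_
    refine add_le_add_right (mul_le_mul_left (ENNReal.ofReal_le_ofReal ?_) _) _
    exact le_max_right _ _
  have hMI : ENNReal.ofReal M * Ifun N Ω q u ≤
      ENNReal.ofReal M * (ENNReal.ofReal c * R) := by
    refine mul_le_mul_right ?_ _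
    have hsum : Ifun N Ω q u ≤ C₁ * R + C₂ * R := by
      refine hI.trans (add_le_add ?_ ?_)
      · exact hA₁.trans (mul_le_mul_right hB₁ _)
      · exact hA₂.trans (mul_le_mul_right hB₂ _)
    refine hsum.trans ?_
    rw [← add_mul]
    refine mul_le_mul_left ?_ _
    rw [← ENNReal.ofReal_toReal hC₁top, ← ENNReal.ofReal_toReal hC₂top,
      ← ENNReal.ofReal_add ENNReal.toReal_nonneg ENNReal.toReal_nonneg]
    exact ENNReal.ofReal_le_ofReal (by rw [hcdef]; linarith)
  have hvol : volume Ω = ENNReal.ofReal V := by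
    rw [hVdef, ENNReal.ofReal_toReal hΩb.measure_lt_top.ne]
  have hR2 : ENNReal.ofReal M * (ENNReal.ofReal c * R) ≤
      2⁻¹ * J + ENNReal.ofReal D := by
    have hRle : R ≤ ENNReal.ofReal (ε * Pp) * J + ENNReal.ofReal (Em * V) := by
      rw [hRdef, hvol, ← ENNReal.ofReal_mul hEm0, ENNReal.ofReal_mul hε0.le]
      exact add_le_add_left (by rw [mul_assoc]; exact mul_le_mul_right hGJ _) _
    calc ENNReal.ofReal M * (ENNReal.ofReal c * R)
        ≤ ENNReal.ofReal M * (ENNReal.ofReal c *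
            (ENNReal.ofReal (ε * Pp) * J + ENNReal.ofReal (Em * V))) := by
          exact mul_le_mul_right (mul_le_mul_right hRle _) _
      _ = ENNReal.ofReal (M * (c * (ε * Pp))) * J +
          ENNReal.ofReal (M * (c * (Em * V))) := by
          rw [mul_add, mul_add, ← mul_assoc, ← mul_assoc, ← mul_assoc, ← mul_assoc,
            ← ENNReal.ofReal_mul hM.le, ← ENNReal.ofReal_mul (by positivity),
            ← ENNReal.ofReal_mul (by positivity), mul_assoc M c, mul_assoc M c]
      _ ≤ 2⁻¹ * J + ENNReal.ofReal D := by
          have h1 : M * (c * (ε * Pp)) = 2⁻¹ := by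
            rw [hεdef]
            field_simp
          have h2 : M * (c * (Em * V)) = D := by rw [hDdef]; ring
          rw [h1, h2]
          refine add_le_add_left (mul_le_mul_left ?_ _) _
          rw [← ENNReal.ofReal_ofNat 2, ← ENNReal.ofReal_inv_of_pos two_pos]
  have hJD : ENNReal.ofReal (2 * D) ≤ J := by
    have hKpow : 2 * D * Pp + 1 ≤ (K - 1) ^ pm := by
      have h1 : X ^ pm = 2 * D * Pp + 1 := by
        rw [hXdef, ← Real.rpow_mul (by positivity), inv_mul_cancel₀ (ne_of_gt hpm0),
          Real.rpow_one]
      calc 2 * D * Pp + 1 = X ^ pm := h1.symm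
        _ ≤ (K - 1) ^ pm := Real.rpow_le_rpow hX0 hKX hpm0.le
    have hcore : ENNReal.ofReal Pp * ENNReal.ofReal (2 * D) ≤ ENNReal.ofReal Pp * J := by
      calc ENNReal.ofReal Pp * ENNReal.ofReal (2 * D)
          = ENNReal.ofReal (Pp * (2 * D)) := (ENNReal.ofReal_mul hPp0.le).symm
        _ ≤ ENNReal.ofReal ((K - 1) ^ pm) := ENNReal.ofReal_le_ofReal (by nlinarith)
        _ ≤ G := hGlow
        _ ≤ ENNReal.ofReal Pp * J := hGJ
    exact (ENNReal.mul_le_mul_iff_right (by simp [hPp0]) ENNReal.ofReal_ne_top).mp hcore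
  have hDhalf : ENNReal.ofReal D ≤ 2⁻¹ * J := by
    have h2 : (2 : ℝ≥0∞) * ENNReal.ofReal D ≤ J := by
      rw [← ENNReal.ofReal_ofNat 2, ← ENNReal.ofReal_mul (by norm_num)]
      exact hJD
    calc ENNReal.ofReal D = 2⁻¹ * (2 * ENNReal.ofReal D) := by
          rw [← mul_assoc, ENNReal.inv_mul_cancel (by norm_num) (by norm_num), one_mul]
      _ ≤ 2⁻¹ * J := mul_le_mul_right h2 _
  calc ENNReal.ofReal M * Ifun N Ω q u
      ≤ 2⁻¹ * J + ENNReal.ofReal D := hMI.trans hR2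
    _ ≤ 2⁻¹ * J + 2⁻¹ * J := add_le_add_right hDhalf _
    _ = J := by rw [← add_mul, ENNReal.inv_two_add_inv_two, one_mul]
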